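/- If the smooth function g : I → ℝ satisfies g'(u)² > 1 and solves u g''(u) + g'(u)(1 − g'(u)²) + u² g'(u)(g'(u)² − 1) = 0 on an open interval I with 0 ∉ I, then there exists a constant C > 0 such that g'(u)² = e^{u²}/(e^{u²} − C u²) for all u ∈ I. -/

import Mathlib

theorem stmt14 (a b : ℝ) (g g' g'' : ℝ → ℝ)
    (h0 : (0 : ℝ) ∉ Set.Ioo a b)
    (hg' : ∀ u ∈ Set.Ioo a b, HasDerivAt g (g' u) u)
    (hg'' : ∀ u ∈ Set.Ioo a b, HasDerivAt g' (g'' u) u)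
    (htl : ∀ u ∈ Set.Ioo a b, (g' u) ^ 2 > 1)
    (hode : ∀ u ∈ Set.Ioo a b,
      u * g'' u + g' u * (1 - (g' u) ^ 2) + u ^ 2 * g' u * ((g' u) ^ 2 - 1) = 0) :
    ∃ C : ℝ, 0 < C ∧ ∀ u ∈ Set.Ioo a b,
      (g' u) ^ 2 = Real.exp (u ^ 2) / (Real.exp (u ^ 2) - C * u ^ 2) := by
  by_cases hab : a < b
  swap
  · exact ⟨1, one_pos, fun u hu => absurd hu (by simp [Set.Ioo_eq_empty hab])⟩
  obtain ⟨x₀, hx₀⟩ := Set.nonempty_Ioo.2 hab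
  set h : ℝ → ℝ := fun u => ((g' u) ^ 2 - 1) / (g' u) ^ 2 * (Real.exp (u ^ 2) / u ^ 2)
    with hh
  -- basic facts at each point
  have hu0 : ∀ u ∈ Set.Ioo a b, u ≠ 0 := fun u hu h' => h0 (h' ▸ hu)
  have hp0 : ∀ u ∈ Set.Ioo a b, g' u ≠ 0 := by
    intro u hu h'
    have := htl u hu
    rw [h'] at this; norm_num at this
  have key : ∀ u ∈ Set.Ioo a b, HasDerivAt h 0 u := by
    intro u hu
    have hu0' := hu0 u hu
    have hp0' := hp0 u hu
    have hode' : u * g'' u = g' u * ((g' u) ^ 2 - 1) * (1 - u ^ 2) :=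
      by linear_combination hode u hu
    have d1 : HasDerivAt (fun x => (g' x) ^ 2 - 1) (2 * g' u * g'' u) u := by
      have := ((hg'' u hu).pow 2).sub_const 1
      simpa [mul_comm, mul_assoc, mul_left_comm] using this
    have d2 : HasDerivAt (fun x => (g' x) ^ 2) (2 * g' u * g'' u) u := by
      have := (hg'' u hu).pow 2
      exact this.congr_deriv (by push_cast; ring)
    have dq : HasDerivAt (fun x => ((g' x) ^ 2 - 1) / (g' x) ^ 2)
        ((2 * g' u * g'' u * (g' u) ^ 2 - ((g' u) ^ 2 - 1) * (2 * g' u * g'' u)) /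
          ((g' u) ^ 2) ^ 2) u :=
      d1.div d2 (pow_ne_zero 2 hp0')
    have d3 : HasDerivAt (fun x : ℝ => Real.exp (x ^ 2)) (Real.exp (u ^ 2) * (2 * u)) u := by
      have := (hasDerivAt_pow 2 u).exp
      simpa [mul_comm, mul_assoc, mul_left_comm] using this
    have d4 : HasDerivAt (fun x : ℝ => x ^ 2) (2 * u) u := by
      simpa using hasDerivAt_pow 2 u
    have dr : HasDerivAt (fun x : ℝ => Real.exp (x ^ 2) / x ^ 2)
        ((Real.exp (u ^ 2) * (2 * u) * u ^ 2 - Real.exp (u ^ 2) * (2 * u)) / (u ^ 2) ^ 2) u :=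
      d3.div d4 (pow_ne_zero 2 hu0')
    have dh : HasDerivAt h _ u := dq.mul dr
    convert dh using 1
    have he := Real.exp_pos (u ^ 2)
    field_simp
    linear_combination (-2 * Real.exp (u ^ 2)) * hode'
  have hconst : ∀ u ∈ Set.Ioo a b, h u = h x₀ := by
    intro u hu
    rcases lt_trichotomy u x₀ with hlt | heq | hgt
    · have hsub : Set.Icc u x₀ ⊆ Set.Ioo a b := Set.Icc_subset_Ioo hu.1 hx₀.2
      have := constant_of_has_deriv_right_zero (f := h) (a := u) (b := x₀)
        (fun x hx => ((key x (hsub hx)).continuousAt).continuousWithinAt)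
        (fun x hx => ((key x (hsub (Set.Ico_subset_Icc_self hx))).hasDerivWithinAt))
      exact (this x₀ (Set.right_mem_Icc.2 hlt.le)).symm
    · rw [heq]
    · have hsub : Set.Icc x₀ u ⊆ Set.Ioo a b := Set.Icc_subset_Ioo hx₀.1 hu.2
      have := constant_of_has_deriv_right_zero (f := h) (a := x₀) (b := u)
        (fun x hx => ((key x (hsub hx)).continuousAt).continuousWithinAt)
        (fun x hx => ((key x (hsub (Set.Ico_subset_Icc_self hx))).hasDerivWithinAt))
      exact this u (Set.right_mem_Icc.2 hgt.le)
  have hCpos : 0 < h x₀ := by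
    have h1 := htl x₀ hx₀
    have h2 := hu0 x₀ hx₀
    have := Real.exp_pos (x₀ ^ 2)
    have hx2 : (0:ℝ) < x₀ ^ 2 := pow_pos (abs_pos.mpr h2) 2 |>.trans_le (by rw [sq_abs])
    apply mul_pos
    · apply div_pos <;> nlinarith
    · exact div_pos this hx2
  refine ⟨h x₀, hCpos, fun u hu => ?_⟩
  have hc := hconst u hu
  have hu0' := hu0 u hu
  have hp0' := hp0 u hu
  have he := Real.exp_pos (u ^ 2)
  have htl' := htl u hu
  -- from hc : ((g' u)^2-1)/(g' u)^2 * (exp/u^2) = C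
  have hden : Real.exp (u ^ 2) - h x₀ * u ^ 2 ≠ 0 := by
    have : h x₀ * u ^ 2 = ((g' u) ^ 2 - 1) / (g' u) ^ 2 * Real.exp (u ^ 2) := by
      rw [← hc, hh]
      field_simp
    rw [this]
    have hg2 : (0:ℝ) < (g' u) ^ 2 := by positivity
    have : Real.exp (u ^ 2) - ((g' u) ^ 2 - 1) / (g' u) ^ 2 * Real.exp (u ^ 2)
        = Real.exp (u ^ 2) / (g' u) ^ 2 := by field_simp; ring
    rw [this]
    positivity
  rw [eq_div_iff hden]
  have hc' : ((g' u) ^ 2 - 1) / (g' u) ^ 2 * (Real.exp (u ^ 2) / u ^ 2) = h x₀ := hc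
  field_simp at hc'
  nlinarith [hc', sq_nonneg u]
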